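/- Let ε > 0 and let V : ℝ^d → ℝ be real-valued, continuous, and integrable, with Wigner collision kernel 𝒱^ε(x,k) = i (2π)^{−d} ∫_{ℝ^d} δ^ε[V](x,y) e^{i y·k} dy and collision operator ℒ_V^ε[f](x,k) = ∫_{ℝ^d} 𝒱^ε(x, k−p) f(x,p) dp (convolution in k). Then ℒ_V^ε is anti-self-adjoint on L²(ℝ^{2d}): for all Schwartz f₁, f₂ : ℝ^d × ℝ^d → ℂ, ∫_{ℝ^{2d}} ℒ_V^ε[f₁](x,k) conj(f₂(x,k)) dx dk = − ∫_{ℝ^{2d}} f₁(x,k) conj( ℒ_V^ε[f₂](x,k) ) dx dk. -/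

import Mathlib

open MeasureTheory Complex
open scoped SchwartzMap

noncomputable section

/-- `δ^ε[V](x,y) = (1/ε)[V(x + (ε/2)y) − V(x − (ε/2)y)]`. -/
def deltaV (d : ℕ) (ε : ℝ) (V : EuclideanSpace ℝ (Fin d) → ℝ)
    (x y : EuclideanSpace ℝ (Fin d)) : ℝ :=
  ε⁻¹ * (V (x + (ε / 2) • y) - V (x - (ε / 2) • y))

/-- The Wigner collision kernel `𝒱^ε(x,k) = i (2π)^{−d} ∫ δ^ε[V](x,y) e^{i y·k} dy`. -/
def wignerKernel (d : ℕ) (ε : ℝ) (V : EuclideanSpace ℝ (Fin d) → ℝ)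
    (x k : EuclideanSpace ℝ (Fin d)) : ℂ :=
  Complex.I * ((((2 * Real.pi) ^ d)⁻¹ : ℝ) : ℂ) * ∫ y : EuclideanSpace ℝ (Fin d),
    ((deltaV d ε V x y : ℝ) : ℂ) * Complex.exp (Complex.I * ((inner ℝ y k : ℝ) : ℂ))

/-- The Wigner collision operator `ℒ_V^ε[f](x,k) = (𝒱^ε(x,·) ∗ f(x,·))(k)`. -/
def collisionOp (d : ℕ) (ε : ℝ) (V : EuclideanSpace ℝ (Fin d) → ℝ)
    (f : EuclideanSpace ℝ (Fin d) × EuclideanSpace ℝ (Fin d) → ℂ)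
    (x k : EuclideanSpace ℝ (Fin d)) : ℂ :=
  ∫ p : EuclideanSpace ℝ (Fin d), wignerKernel d ε V x (k - p) * f (x, p)

namespace CollisionAux

variable {d : ℕ} {ε : ℝ} {V : EuclideanSpace ℝ (Fin d) → ℝ}

/-- Integrability of an affine reparametrization of `V`. -/
lemma integrable_comp_affine
    (hVint : Integrable V (volume : Measure (EuclideanSpace ℝ (Fin d))))
    (x : EuclideanSpace ℝ (Fin d)) {c : ℝ} (hc : c ≠ 0) :
    Integrable (fun y : EuclideanSpace ℝ (Fin d) => V (x + c • y)) volume :=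
  (hVint.comp_add_left x).comp_smul hc

lemma integrable_deltaV (hε : 0 < ε)
    (hVint : Integrable V (volume : Measure (EuclideanSpace ℝ (Fin d))))
    (x : EuclideanSpace ℝ (Fin d)) :
    Integrable (fun y => deltaV d ε V x y) volume := by
  have hc : (ε / 2 : ℝ) ≠ 0 := by positivity
  have h1 := integrable_comp_affine hVint x hc
  have h2 : Integrable (fun y : EuclideanSpace ℝ (Fin d) => V (x - (ε/2) • y)) volume := by
    have := integrable_comp_affine hVint x (neg_ne_zero.mpr hc)
    simpa [sub_eq_add_neg, neg_smul] using this
  simpa [deltaV] using ((h1.sub h2).const_mul ε⁻¹)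

lemma integral_norm_comp_affine
    (hVint : Integrable V (volume : Measure (EuclideanSpace ℝ (Fin d))))
    (x : EuclideanSpace ℝ (Fin d)) {c : ℝ} (hc : c ≠ 0) :
    ∫ y : EuclideanSpace ℝ (Fin d), |V (x + c • y)|
      = |(c ^ d)⁻¹| * ∫ u : EuclideanSpace ℝ (Fin d), |V u| := by
  have h := MeasureTheory.Measure.integral_comp_smul
    (volume : Measure (EuclideanSpace ℝ (Fin d))) (fun u => |V (x + u)|) c
  rw [finrank_euclideanSpace_fin] at h
  rw [h, MeasureTheory.integral_add_left_eq_self (fun u => |V u|) x]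
  simp [smul_eq_mul]

/-- Uniform bound on `∫ ‖δ^ε[V](x,y)‖ dy`. -/
lemma integral_norm_deltaV_le (hε : 0 < ε)
    (hVint : Integrable V (volume : Measure (EuclideanSpace ℝ (Fin d))))
    (x : EuclideanSpace ℝ (Fin d)) :
    ∫ y : EuclideanSpace ℝ (Fin d), ‖deltaV d ε V x y‖
      ≤ ε⁻¹ * (2 * (|((ε/2) ^ d)⁻¹| * ∫ u : EuclideanSpace ℝ (Fin d), |V u|)) := by
  have hc : (ε / 2 : ℝ) ≠ 0 := by positivity
  have h1 := integrable_comp_affine hVint x hc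
  have h2 : Integrable (fun y : EuclideanSpace ℝ (Fin d) => V (x - (ε/2) • y)) volume := by
    have := integrable_comp_affine hVint x (neg_ne_zero.mpr hc)
    simpa [sub_eq_add_neg, neg_smul] using this
  have hle : ∀ y : EuclideanSpace ℝ (Fin d),
      ‖deltaV d ε V x y‖ ≤ ε⁻¹ * (|V (x + (ε/2) • y)| + |V (x - (ε/2) • y)|) := by
    intro y
    rw [deltaV]
    rw [norm_mul, Real.norm_eq_abs, Real.norm_eq_abs, _root_.abs_of_nonneg (by positivity : (0:ℝ) ≤ ε⁻¹)]
    exact mul_le_mul_of_nonneg_left (abs_sub _ _) (by positivity)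
  calc ∫ y : EuclideanSpace ℝ (Fin d), ‖deltaV d ε V x y‖
      ≤ ∫ y : EuclideanSpace ℝ (Fin d), ε⁻¹ * (|V (x + (ε/2) • y)| + |V (x - (ε/2) • y)|) := by
        refine integral_mono_of_nonneg (Filter.Eventually.of_forall fun y => norm_nonneg _)
          (((h1.abs.add h2.abs).const_mul ε⁻¹)) (Filter.Eventually.of_forall hle)
    _ = ε⁻¹ * ((∫ y : EuclideanSpace ℝ (Fin d), |V (x + (ε/2) • y)|)
          + ∫ y : EuclideanSpace ℝ (Fin d), |V (x - (ε/2) • y)|) := by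
        rw [MeasureTheory.integral_const_mul, integral_add h1.abs h2.abs]
    _ = ε⁻¹ * (2 * (|((ε/2) ^ d)⁻¹| * ∫ u : EuclideanSpace ℝ (Fin d), |V u|)) := by
        have e1 := integral_norm_comp_affine hVint x hc
        have e2 : (∫ y : EuclideanSpace ℝ (Fin d), |V (x - (ε/2) • y)|)
            = |((ε/2) ^ d)⁻¹| * ∫ u : EuclideanSpace ℝ (Fin d), |V u| := by
          have := integral_norm_comp_affine hVint x (neg_ne_zero.mpr hc)
          simp only [sub_eq_add_neg, neg_smul] at *
          rw [this]
          congr 1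
          rw [abs_inv, abs_inv, _root_.abs_pow, _root_.abs_pow, _root_.abs_neg]
        rw [e1, e2]; ring

/-- Uniform bound on the Wigner kernel. -/
lemma norm_wignerKernel_le (hε : 0 < ε)
    (hVint : Integrable V (volume : Measure (EuclideanSpace ℝ (Fin d))))
    (x k : EuclideanSpace ℝ (Fin d)) :
    ‖wignerKernel d ε V x k‖
      ≤ (((2 * Real.pi) ^ d)⁻¹)
        * (ε⁻¹ * (2 * (|((ε/2) ^ d)⁻¹| * ∫ u : EuclideanSpace ℝ (Fin d), |V u|))) := by
  have hcoef : (0:ℝ) ≤ ((2 * Real.pi) ^ d)⁻¹ := by positivity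
  rw [wignerKernel]
  rw [norm_mul, norm_mul, Complex.norm_I, one_mul, Complex.norm_real, Real.norm_eq_abs,
    _root_.abs_of_nonneg hcoef]
  refine mul_le_mul_of_nonneg_left ?_ hcoef
  calc ‖∫ y : EuclideanSpace ℝ (Fin d),
        ((deltaV d ε V x y : ℝ) : ℂ) * Complex.exp (Complex.I * ((inner ℝ y k : ℝ) : ℂ))‖
      ≤ ∫ y : EuclideanSpace ℝ (Fin d),
        ‖((deltaV d ε V x y : ℝ) : ℂ) * Complex.exp (Complex.I * ((inner ℝ y k : ℝ) : ℂ))‖ :=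
        norm_integral_le_integral_norm _
    _ = ∫ y : EuclideanSpace ℝ (Fin d), ‖deltaV d ε V x y‖ := by
        congr 1
        funext y
        rw [norm_mul, Complex.norm_real]
        have : ‖Complex.exp (Complex.I * ((inner ℝ y k : ℝ) : ℂ))‖ = 1 := by
          rw [Complex.norm_exp]
          simp [Complex.mul_re]
        rw [this, mul_one]
    _ ≤ _ := integral_norm_deltaV_le hε hVint x

/-- Joint strong measurability of the Wigner kernel. -/
lemma stronglyMeasurable_wignerKernel (hVcont : Continuous V) :
    StronglyMeasurable
      (fun q : EuclideanSpace ℝ (Fin d) × EuclideanSpace ℝ (Fin d) =>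
        wignerKernel d ε V q.1 q.2) := by
  have hG : Continuous (fun z : (EuclideanSpace ℝ (Fin d) × EuclideanSpace ℝ (Fin d))
      × EuclideanSpace ℝ (Fin d) =>
      ((deltaV d ε V z.1.1 z.2 : ℝ) : ℂ)
        * Complex.exp (Complex.I * ((inner ℝ z.2 z.1.2 : ℝ) : ℂ))) := by
    apply Continuous.mul
    · apply Complex.continuous_ofReal.comp
      unfold deltaV
      fun_prop
    · apply Complex.continuous_exp.comp
      apply Continuous.mul continuous_const
      apply Complex.continuous_ofReal.comp
      exact continuous_inner.comp (continuous_snd.prodMk (continuous_fst.snd))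
  have := hG.stronglyMeasurable.integral_prod_right'
    (ν := (volume : Measure (EuclideanSpace ℝ (Fin d))))
  exact (stronglyMeasurable_const.mul this : _)

lemma conj_wignerKernel (x k : EuclideanSpace ℝ (Fin d)) :
    (starRingEnd ℂ) (wignerKernel d ε V x k) = - wignerKernel d ε V x (-k) := by
  rw [wignerKernel, wignerKernel]
  rw [map_mul, map_mul, ← integral_conj, Complex.conj_I, Complex.conj_ofReal]
  have : ∀ y : EuclideanSpace ℝ (Fin d),
      (starRingEnd ℂ) (((deltaV d ε V x y : ℝ) : ℂ)
          * Complex.exp (Complex.I * ((inner ℝ y k : ℝ) : ℂ)))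
        = ((deltaV d ε V x y : ℝ) : ℂ)
          * Complex.exp (Complex.I * ((inner ℝ y (-k) : ℝ) : ℂ)) := by
    intro y
    rw [map_mul, Complex.conj_ofReal, ← Complex.exp_conj, map_mul, Complex.conj_I,
      Complex.conj_ofReal]
    congr 2
    rw [inner_neg_right]
    push_cast
    ring
  simp_rw [this]
  ring

/-- A Schwartz function on a product decays separately in both variables. -/
lemma schwartz_prod_bound
    (f : 𝓢(EuclideanSpace ℝ (Fin d) × EuclideanSpace ℝ (Fin d), ℂ)) :
    ∃ C : ℝ, 0 ≤ C ∧ ∀ x p : EuclideanSpace ℝ (Fin d),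
      ‖f (x, p)‖ ≤ C * (((1 + ‖x‖) ^ (d + 1))⁻¹ * ((1 + ‖p‖) ^ (d + 1))⁻¹) := by
  obtain ⟨C₀, hC₀pos, hC₀⟩ := f.decay 0 0
  obtain ⟨C₁, hC₁pos, hC₁⟩ := f.decay (2 * (d + 1)) 0
  refine ⟨2 ^ (2 * (d + 1)) * (C₀ + C₁), by positivity, fun x p => ?_⟩
  have hbx : (0:ℝ) < (1 + ‖x‖) ^ (d + 1) := by positivity
  have hbp : (0:ℝ) < (1 + ‖p‖) ^ (d + 1) := by positivity
  rw [← mul_inv, ← div_eq_mul_inv, le_div_iff₀ (by positivity)]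
  set t : ℝ := ‖(x, p)‖ with ht_def
  have ht0 : 0 ≤ t := norm_nonneg _
  have htx : ‖x‖ ≤ t := norm_fst_le (x, p)
  have htp : ‖p‖ ≤ t := norm_snd_le (x, p)
  have hf0 : ‖f (x, p)‖ ≤ C₀ := by
    have := hC₀ (x, p)
    simpa [norm_iteratedFDeriv_zero] using this
  have hf1 : t ^ (2 * (d + 1)) * ‖f (x, p)‖ ≤ C₁ := by
    have h := hC₁ (x, p)
    rwa [norm_iteratedFDeriv_zero] at h
  have hstep : (1 + ‖x‖) ^ (d + 1) * (1 + ‖p‖) ^ (d + 1)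
      ≤ 2 ^ (2 * (d + 1)) * (1 + t ^ (2 * (d + 1))) := by
    calc (1 + ‖x‖) ^ (d + 1) * (1 + ‖p‖) ^ (d + 1)
        ≤ (1 + t) ^ (d + 1) * (1 + t) ^ (d + 1) := by
          gcongr <;> linarith
      _ = (1 + t) ^ (2 * (d + 1)) := by rw [← pow_add]; ring_nf
      _ ≤ (2 * max 1 t) ^ (2 * (d + 1)) := by
          gcongr
          rcases le_total t 1 with h | h
          · rw [max_eq_left h]; linarith
          · rw [max_eq_right h]; linarith
      _ = 2 ^ (2 * (d + 1)) * (max 1 t) ^ (2 * (d + 1)) := by rw [mul_pow]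
      _ ≤ 2 ^ (2 * (d + 1)) * (1 + t ^ (2 * (d + 1))) := by
          gcongr
          rcases le_total t 1 with h | h
          · rw [max_eq_left h, one_pow]
            have : (0:ℝ) ≤ t ^ (2 * (d + 1)) := by positivity
            linarith
          · rw [max_eq_right h]
            nlinarith [pow_nonneg ht0 (2 * (d + 1)), one_le_pow₀ h (n := 2 * (d + 1))]
  calc ‖f (x, p)‖ * ((1 + ‖x‖) ^ (d + 1) * (1 + ‖p‖) ^ (d + 1))
      ≤ ‖f (x, p)‖ * (2 ^ (2 * (d + 1)) * (1 + t ^ (2 * (d + 1)))) := by gcongr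
    _ = 2 ^ (2 * (d + 1)) * (‖f (x, p)‖ + t ^ (2 * (d + 1)) * ‖f (x, p)‖) := by ring
    _ ≤ 2 ^ (2 * (d + 1)) * (C₀ + C₁) := by gcongr

lemma one_add_norm_pow_inv_le_one (v : EuclideanSpace ℝ (Fin d)) :
    ((1 + ‖v‖) ^ (d + 1))⁻¹ ≤ 1 := by
  rw [inv_le_one_iff₀]
  right
  exact one_le_pow₀ (by have := norm_nonneg v; linarith)

lemma schwartz_section_bound
    (f : 𝓢(EuclideanSpace ℝ (Fin d) × EuclideanSpace ℝ (Fin d), ℂ)) :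
    ∃ C : ℝ, 0 ≤ C ∧ ∀ x p : EuclideanSpace ℝ (Fin d),
      ‖f (x, p)‖ ≤ C * ((1 + ‖p‖) ^ (d + 1))⁻¹ := by
  obtain ⟨C, hC0, hC⟩ := schwartz_prod_bound f
  refine ⟨C, hC0, fun x p => (hC x p).trans ?_⟩
  have h1 := one_add_norm_pow_inv_le_one x
  have h2 : (0:ℝ) ≤ ((1 + ‖p‖) ^ (d + 1))⁻¹ := by positivity
  calc C * (((1 + ‖x‖) ^ (d + 1))⁻¹ * ((1 + ‖p‖) ^ (d + 1))⁻¹)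
      ≤ C * (1 * ((1 + ‖p‖) ^ (d + 1))⁻¹) := by
        gcongr
    _ = C * ((1 + ‖p‖) ^ (d + 1))⁻¹ := by ring

lemma integrable_g :
    Integrable (fun p : EuclideanSpace ℝ (Fin d) => ((1 + ‖p‖) ^ (d + 1))⁻¹) volume := by
  have h : Integrable (fun p : EuclideanSpace ℝ (Fin d) => (1 + ‖p‖) ^ (-((d : ℝ) + 1)))
      volume := by
    apply integrable_one_add_norm
    rw [finrank_euclideanSpace_fin]
    linarith
  have he : ∀ p : EuclideanSpace ℝ (Fin d),
      (1 + ‖p‖) ^ (-((d : ℝ) + 1)) = ((1 + ‖p‖) ^ (d + 1))⁻¹ := by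
    intro p
    have h1 : (0:ℝ) ≤ 1 + ‖p‖ := by have := norm_nonneg p; linarith
    rw [Real.rpow_neg h1]
    congr 1
    rw [← Real.rpow_natCast (1 + ‖p‖) (d + 1)]
    push_cast
    ring_nf
  simpa only [he] using h

lemma schwartz_section_integrable
    (f : 𝓢(EuclideanSpace ℝ (Fin d) × EuclideanSpace ℝ (Fin d), ℂ))
    (x : EuclideanSpace ℝ (Fin d)) :
    Integrable (fun p => f (x, p)) volume := by
  obtain ⟨C, hC0, hC⟩ := schwartz_section_bound f
  refine (integrable_g.const_mul C).mono' ?_ (Filter.Eventually.of_forall fun p => hC x p)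
  exact (f.continuous.comp (Continuous.prodMk_right x)).aestronglyMeasurable

lemma schwartz_integrable_prod
    (f : 𝓢(EuclideanSpace ℝ (Fin d) × EuclideanSpace ℝ (Fin d), ℂ)) :
    Integrable (⇑f) ((volume : Measure (EuclideanSpace ℝ (Fin d))).prod volume) := by
  obtain ⟨C, hC0, hC⟩ := schwartz_prod_bound f
  refine ((integrable_g.mul_prod integrable_g).const_mul C).mono'
    f.continuous.aestronglyMeasurable (Filter.Eventually.of_forall fun z => ?_)
  have := hC z.1 z.2
  simpa using this

end CollisionAux

/-- The Wigner collision operator is anti-self-adjoint on `L²(ℝ^{2d})`. -/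
theorem collisionOp_anti_self_adjoint (d : ℕ) (ε : ℝ) (hε : 0 < ε)
    (V : EuclideanSpace ℝ (Fin d) → ℝ) (hVcont : Continuous V)
    (hVint : Integrable V (volume : Measure (EuclideanSpace ℝ (Fin d))))
    (f₁ f₂ : 𝓢(EuclideanSpace ℝ (Fin d) × EuclideanSpace ℝ (Fin d), ℂ)) :
    ∫ z : EuclideanSpace ℝ (Fin d) × EuclideanSpace ℝ (Fin d),
        collisionOp d ε V (⇑f₁) z.1 z.2 * (starRingEnd ℂ) (f₂ z)
      = -∫ z : EuclideanSpace ℝ (Fin d) × EuclideanSpace ℝ (Fin d),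
          f₁ z * (starRingEnd ℂ) (collisionOp d ε V (⇑f₂) z.1 z.2) := by
  classical
  obtain ⟨C₁, hC₁0, hC₁⟩ := CollisionAux.schwartz_section_bound f₁
  obtain ⟨C₂, hC₂0, hC₂⟩ := CollisionAux.schwartz_section_bound f₂
  set g : EuclideanSpace ℝ (Fin d) → ℝ := fun p => ((1 + ‖p‖) ^ (d + 1))⁻¹ with hg_def
  have hg : Integrable g volume := CollisionAux.integrable_g
  have hg0 : ∀ p, 0 ≤ g p := fun p => by rw [hg_def]; positivity
  set KB : ℝ := (((2 * Real.pi) ^ d)⁻¹)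
    * (ε⁻¹ * (2 * (|((ε/2) ^ d)⁻¹| * ∫ u : EuclideanSpace ℝ (Fin d), |V u|))) with hKB_def
  have hK_le : ∀ x k, ‖wignerKernel d ε V x k‖ ≤ KB := fun x k =>
    CollisionAux.norm_wignerKernel_le hε hVint x k
  have hKB0 : 0 ≤ KB := le_trans (norm_nonneg _) (hK_le 0 0)
  have hKmeas : Measurable (fun q : EuclideanSpace ℝ (Fin d) × EuclideanSpace ℝ (Fin d) =>
      wignerKernel d ε V q.1 q.2) :=
    (CollisionAux.stronglyMeasurable_wignerKernel hVcont).measurable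
  have hsec := fun (f : 𝓢(EuclideanSpace ℝ (Fin d) × EuclideanSpace ℝ (Fin d), ℂ)) x =>
    CollisionAux.schwartz_section_integrable f x
  -- bound for the collision operator
  have hcoll_le : ∀ (f : 𝓢(EuclideanSpace ℝ (Fin d) × EuclideanSpace ℝ (Fin d), ℂ)) (C : ℝ),
      0 ≤ C → (∀ x p, ‖f (x, p)‖ ≤ C * g p) →
      ∀ x k, ‖collisionOp d ε V (⇑f) x k‖ ≤ KB * C * ∫ p, g p := by
    intro f C hC hCf x k
    rw [collisionOp]
    refine (norm_integral_le_integral_norm _).trans ?_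
    calc ∫ p, ‖wignerKernel d ε V x (k - p) * f (x, p)‖
        ≤ ∫ p, KB * C * g p := by
          refine integral_mono_of_nonneg (Filter.Eventually.of_forall fun p => norm_nonneg _)
            (hg.const_mul (KB * C)) (Filter.Eventually.of_forall fun p => ?_)
          dsimp only
          rw [norm_mul]
          calc ‖wignerKernel d ε V x (k - p)‖ * ‖f (x, p)‖
              ≤ KB * (C * g p) := mul_le_mul (hK_le _ _) (hCf x p) (norm_nonneg _) hKB0
            _ = KB * C * g p := by ring
      _ = KB * C * ∫ p, g p := MeasureTheory.integral_const_mul _ _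
  -- measurability of the collision operator
  have hcoll_meas : ∀ (f : 𝓢(EuclideanSpace ℝ (Fin d) × EuclideanSpace ℝ (Fin d), ℂ)),
      StronglyMeasurable (fun z : EuclideanSpace ℝ (Fin d) × EuclideanSpace ℝ (Fin d) =>
        collisionOp d ε V (⇑f) z.1 z.2) := by
    intro f
    have h : StronglyMeasurable (fun w : (EuclideanSpace ℝ (Fin d) × EuclideanSpace ℝ (Fin d))
        × EuclideanSpace ℝ (Fin d) =>
        wignerKernel d ε V w.1.1 (w.1.2 - w.2) * f (w.1.1, w.2)) := by
      apply Measurable.stronglyMeasurable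
      exact (hKmeas.comp ((measurable_fst.comp measurable_fst).prodMk
          ((measurable_snd.comp measurable_fst).sub measurable_snd))).mul
        (f.continuous.measurable.comp
          ((measurable_fst.comp measurable_fst).prodMk measurable_snd))
    exact h.integral_prod_right'
  -- outer integrability
  have houter₁ : Integrable (fun z : EuclideanSpace ℝ (Fin d) × EuclideanSpace ℝ (Fin d) =>
      collisionOp d ε V (⇑f₁) z.1 z.2 * (starRingEnd ℂ) (f₂ z)) volume := by
    refine (((CollisionAux.schwartz_integrable_prod f₂).norm.const_mul
      (KB * C₁ * ∫ p, g p))).mono' ?_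
      (Filter.Eventually.of_forall fun z => ?_)
    · exact ((hcoll_meas f₁).measurable.mul
        ((continuous_star.comp f₂.continuous).measurable)).aestronglyMeasurable
    · rw [norm_mul, RCLike.norm_conj]
      exact mul_le_mul_of_nonneg_right (hcoll_le f₁ C₁ hC₁0 hC₁ z.1 z.2) (norm_nonneg _)
  have houter₂ : Integrable (fun z : EuclideanSpace ℝ (Fin d) × EuclideanSpace ℝ (Fin d) =>
      f₁ z * (starRingEnd ℂ) (collisionOp d ε V (⇑f₂) z.1 z.2)) volume := by
    refine (((CollisionAux.schwartz_integrable_prod f₁).norm.const_mul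
      (KB * C₂ * ∫ p, g p))).mono' ?_
      (Filter.Eventually.of_forall fun z => ?_)
    · exact (f₁.continuous.measurable.mul
        (continuous_star.measurable.comp (hcoll_meas f₂).measurable)).aestronglyMeasurable
    · rw [norm_mul, RCLike.norm_conj, mul_comm]
      exact mul_le_mul_of_nonneg_right (hcoll_le f₂ C₂ hC₂0 hC₂ z.1 z.2) (norm_nonneg _)
  -- the fiberwise identity
  have key : ∀ x : EuclideanSpace ℝ (Fin d),
      (∫ k, collisionOp d ε V (⇑f₁) x k * (starRingEnd ℂ) (f₂ (x, k)))
      = -∫ p, f₁ (x, p) * (starRingEnd ℂ) (collisionOp d ε V (⇑f₂) x p) := by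
    intro x
    have hF : Integrable (fun q : EuclideanSpace ℝ (Fin d) × EuclideanSpace ℝ (Fin d) =>
        wignerKernel d ε V x (q.1 - q.2) * f₁ (x, q.2) * (starRingEnd ℂ) (f₂ (x, q.1)))
        (volume.prod volume) := by
      refine (((hsec f₂ x).norm.mul_prod (hsec f₁ x).norm).const_mul KB).mono' ?_
        (Filter.Eventually.of_forall fun q => ?_)
      · apply Measurable.aestronglyMeasurable
        refine ((hKmeas.comp (measurable_const.prodMk
            (measurable_fst.sub measurable_snd))).mul
          (f₁.continuous.measurable.comp (measurable_const.prodMk measurable_snd))).mul ?_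
        exact continuous_star.measurable.comp
          (f₂.continuous.measurable.comp (measurable_const.prodMk measurable_fst))
      · rw [norm_mul, norm_mul, RCLike.norm_conj]
        calc ‖wignerKernel d ε V x (q.1 - q.2)‖ * ‖f₁ (x, q.2)‖ * ‖f₂ (x, q.1)‖
            ≤ KB * ‖f₁ (x, q.2)‖ * ‖f₂ (x, q.1)‖ := by
              gcongr
              exact hK_le _ _
          _ = KB * (‖f₂ (x, q.1)‖ * ‖f₁ (x, q.2)‖) := by ring
    have hconj : ∀ p k : EuclideanSpace ℝ (Fin d),
        (starRingEnd ℂ) (wignerKernel d ε V x (p - k)) = -wignerKernel d ε V x (k - p) := by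
      intro p k
      rw [CollisionAux.conj_wignerKernel, neg_sub]
    calc (∫ k, collisionOp d ε V (⇑f₁) x k * (starRingEnd ℂ) (f₂ (x, k)))
        = ∫ k, ∫ p, wignerKernel d ε V x (k - p) * f₁ (x, p) * (starRingEnd ℂ) (f₂ (x, k)) := by
          congr 1
          funext k
          rw [collisionOp, ← MeasureTheory.integral_mul_const]
      _ = ∫ p, ∫ k, wignerKernel d ε V x (k - p) * f₁ (x, p) * (starRingEnd ℂ) (f₂ (x, k)) := by
          exact integral_integral_swap hF
      _ = -∫ p, f₁ (x, p) * (starRingEnd ℂ) (collisionOp d ε V (⇑f₂) x p) := by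
          rw [← integral_neg]
          congr 1
          funext p
          rw [collisionOp, ← integral_conj]
          simp_rw [map_mul, hconj, neg_mul, integral_neg, mul_neg, neg_neg,
            ← MeasureTheory.integral_const_mul]
          congr 1
          funext k
          ring
  -- put everything together
  rw [show (volume : Measure (EuclideanSpace ℝ (Fin d) × EuclideanSpace ℝ (Fin d)))
      = (volume : Measure (EuclideanSpace ℝ (Fin d))).prod volume from
      rfl] at houter₁ houter₂ ⊢
  rw [MeasureTheory.integral_prod _ houter₁, MeasureTheory.integral_prod _ houter₂]
  simp_rw [key]
  rw [integral_neg]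

end
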